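/- If the points x_i are chosen as quantiles x_i = F^{-1}(i/(n+1)) of a continuous strictly increasing distribution function F, then the fixed point F̃ of the quantile IFS operator T_F u(x) = (1/(n+1))·u((x−x_{i−1})/(x_i−x_{i−1})) + (i−1)/(n+1) satisfies d_sup(F̃, F) ≤ 1/(n+1). -/

import Mathlib

open Set Filter Topology

/-- A distribution function on `[0,1]`: non-decreasing, right-continuous,
`F 0 = 0` and `F 1 = 1`. -/
def IsDF (F : ℝ → ℝ) : Prop :=
  MonotoneOn F (Set.Icc 0 1) ∧
  (∀ a ∈ Set.Ico (0:ℝ) 1, ContinuousWithinAt F (Set.Icc a 1) a) ∧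
  F 0 = 0 ∧ F 1 = 1

/-- The sup distance between two functions, over `[0,1]`. -/
noncomputable def dsup (F G : ℝ → ℝ) : ℝ :=
  ⨆ x : Set.Icc (0:ℝ) 1, |F x - G x|

/-- If the nodes are the quantiles `x_i = F⁻¹(i/(n+1))` of a continuous strictly
increasing distribution function `F`, then the fixed point `F̃` of the quantile
IFS operator `T_F u t = (1/(n+1)) u ((t - x_i)/(x_{i+1} - x_i)) + i/(n+1)`
satisfies `d_sup (F̃, F) ≤ 1/(n+1)`. -/
theorem stmt15 (n : ℕ) (F : ℝ → ℝ) (hF : IsDF F)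
    (hFc : ContinuousOn F (Set.Icc 0 1)) (hFs : StrictMonoOn F (Set.Icc 0 1))
    (x : Fin (n+2) → ℝ) (hx : StrictMono x)
    (hxmem : ∀ i, x i ∈ Set.Icc (0:ℝ) 1)
    (hquant : ∀ i : Fin (n+2), F (x i) = (i : ℕ) / ((n : ℝ) + 1))
    (Ft : ℝ → ℝ) (hFt : IsDF Ft)
    (hfix : ∀ i : Fin (n+1), ∀ t ∈ Set.Ico (x i.castSucc) (x i.succ),
      Ft t = (1 / ((n : ℝ) + 1)) *
          Ft ((t - x i.castSucc) / (x i.succ - x i.castSucc)) + (i : ℕ) / ((n : ℝ) + 1))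
    (hfix1 : Ft 1 = 1) :
    dsup Ft F ≤ 1 / ((n : ℝ) + 1) := by
  have hn : (0:ℝ) < (n:ℝ) + 1 := by positivity
  obtain ⟨hFtmono, -, hFt0, hFt1⟩ := hFt
  obtain ⟨hFmono, -, hF0, hF1⟩ := hF
  have h01 : (0:ℝ) ∈ Set.Icc (0:ℝ) 1 := by norm_num
  have h11 : (1:ℝ) ∈ Set.Icc (0:ℝ) 1 := by norm_num
  have hx0 : x 0 = 0 := by
    apply hFs.injOn (hxmem 0) h01
    rw [hquant 0, hF0]; simp
  have hxl : x (Fin.last (n+1)) = 1 := by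
    apply hFs.injOn (hxmem _) h11
    rw [hquant, hF1, Fin.val_last]
    push_cast; field_simp
  have key : ∀ t ∈ Set.Icc (0:ℝ) 1, |Ft t - F t| ≤ 1/((n:ℝ)+1) := by
    intro t ht
    rcases eq_or_lt_of_le ht.2 with h1 | h1
    · rw [h1, hFt1, hF1]
      simp only [sub_self, abs_zero]
      positivity
    · set S : Finset (Fin (n+2)) := Finset.univ.filter (fun j => x j ≤ t) with hS
      have h0S : (0 : Fin (n+2)) ∈ S := by
        simp [hS, hx0, ht.1]
      have hSne : S.Nonempty := ⟨0, h0S⟩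
      set j := S.max' hSne with hj
      have hjle : x j ≤ t := by
        have := S.max'_mem hSne
        simp [hS] at this
        exact this
      have hjne : j ≠ Fin.last (n+1) := by
        intro h
        rw [h, hxl] at hjle
        linarith
      set i := j.castPred hjne with hi
      have hic : i.castSucc = j := Fin.castSucc_castPred _ _
      have hlt : t < x i.succ := by
        by_contra h
        push_neg at h
        have hmem : i.succ ∈ S := by simp [hS, h]
        have hle := S.le_max' _ hmem
        rw [Fin.le_def] at hle
        have h2 : ((i.succ : Fin (n+2)) : ℕ) = (j:ℕ) + 1 := by
          simp [hi, Fin.val_succ]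
        omega
      have hab : x i.castSucc < x i.succ := hx (Fin.castSucc_lt_succ (i := i))
      have ht1 : x i.castSucc ≤ t := by rw [hic]; exact hjle
      have hFtt := hfix i t ⟨ht1, hlt⟩
      set s := (t - x i.castSucc)/(x i.succ - x i.castSucc) with hs
      have hs0 : 0 ≤ s := div_nonneg (by linarith) (by linarith)
      have hs1 : s ≤ 1 := by
        rw [div_le_one (by linarith)]; linarith
      have hFts0 : 0 ≤ Ft s := by
        have := hFtmono h01 ⟨hs0, hs1⟩ hs0
        rwa [hFt0] at this
      have hFts1 : Ft s ≤ 1 := by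
        have := hFtmono ⟨hs0, hs1⟩ h11 hs1
        rwa [hFt1] at this
      have hFa : F (x i.castSucc) = ((i:ℕ):ℝ)/((n:ℝ)+1) := by
        rw [hquant]; simp
      have hFb : F (x i.succ) = (((i:ℕ):ℝ)+1)/((n:ℝ)+1) := by
        rw [hquant, Fin.val_succ]; push_cast; ring
      have hta : x i.castSucc ∈ Set.Icc (0:ℝ) 1 := hxmem _
      have htb : x i.succ ∈ Set.Icc (0:ℝ) 1 := hxmem _
      have hFt_lb : F (x i.castSucc) ≤ F t := hFmono hta ht ht1
      have hFt_ub : F t ≤ F (x i.succ) := hFmono ht htb hlt.le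
      rw [hFa] at hFt_lb
      rw [hFb] at hFt_ub
      have e1 : (1/((n:ℝ)+1)) * Ft s ≤ 1/((n:ℝ)+1) :=
        mul_le_of_le_one_right (by positivity) hFts1
      have e2 : 0 ≤ (1/((n:ℝ)+1)) * Ft s := by positivity
      have hd : (((i:ℕ):ℝ)+1)/((n:ℝ)+1) - ((i:ℕ):ℝ)/((n:ℝ)+1) = 1/((n:ℝ)+1) := by
        field_simp
        ring
      rw [abs_sub_le_iff]
      constructor <;> (rw [hFtt]; linarith)
  haveI : Nonempty ↥(Set.Icc (0:ℝ) 1) := ⟨⟨0, h01⟩⟩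
  unfold dsup
  apply ciSup_le
  rintro ⟨t, ht⟩
  exact key t ht
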